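/- Let P be a locally finite partially ordered set with a weak rank function r, and let ζ be the element of the incidence algebra of P over ℤ[t] with ζ x y = 1 for all x ≤ y. Then ζ is a unit, and χ := ζ^{-1} * \bar ζ is a P-kernel: χ x x = 1 for all x, deg(χ x y) ≤ r x y for all x ≤ y, and \bar χ * χ = δ. -/

import Mathlib

open Finset Polynomial

/-- The bar involution on the incidence algebra of `P` over `ℤ[t]` relative to a weak rank
function `r`: it sends `f` to the function `x y ↦ t^(r x y) · (f x y)(t⁻¹)`, i.e. the
reflection of `f x y` at degree `r x y`. -/
noncomputable def IncidenceAlgebra.bar {P : Type*} [PartialOrder P] [LocallyFiniteOrder P]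
    (r : P → P → ℕ) (f : IncidenceAlgebra (Polynomial ℤ) P) :
    IncidenceAlgebra (Polynomial ℤ) P :=
  ⟨fun x y => (f x y).reflect (r x y), fun x y h => by
    try simp only []
    rw [IncidenceAlgebra.apply_eq_zero_of_not_le h, Polynomial.reflect_zero]⟩

lemma reflect_reflect' {R : Type*} [Semiring R] (N : ℕ) (p : R[X]) :
    (p.reflect N).reflect N = p := by
  ext i
  rw [coeff_reflect, coeff_reflect, revAt_invol]

@[simp] lemma IncidenceAlgebra.bar_apply {P : Type*} [PartialOrder P] [LocallyFiniteOrder P]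
    (r : P → P → ℕ) (f : IncidenceAlgebra (Polynomial ℤ) P) (x y : P) :
    IncidenceAlgebra.bar r f x y = (f x y).reflect (r x y) := rfl

lemma IncidenceAlgebra.bar_bar {P : Type*} [PartialOrder P] [LocallyFiniteOrder P]
    (r : P → P → ℕ) (f : IncidenceAlgebra (Polynomial ℤ) P) :
    IncidenceAlgebra.bar r (IncidenceAlgebra.bar r f) = f := by
  ext x y _
  simp [reflect_reflect']

lemma reflect_sum' {R : Type*} [Semiring R] {ι : Type*} (s : Finset ι) (N : ℕ)
    (p : ι → R[X]) : (∑ i ∈ s, p i).reflect N = ∑ i ∈ s, (p i).reflect N := by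
  classical
  induction s using Finset.induction with
  | empty => simp
  | insert _ _ h ih => simp [Finset.sum_insert h, reflect_add, ih]

lemma IncidenceAlgebra.bar_mul {P : Type*} [PartialOrder P] [LocallyFiniteOrder P]
    (r : P → P → ℕ) (hr_add : ∀ x y z : P, x ≤ y → y ≤ z → r x y + r y z = r x z)
    (f g : IncidenceAlgebra (Polynomial ℤ) P)
    (hf : ∀ x y : P, x ≤ y → (f x y).natDegree ≤ r x y)
    (hg : ∀ x y : P, x ≤ y → (g x y).natDegree ≤ r x y) :
    IncidenceAlgebra.bar r (f * g) = IncidenceAlgebra.bar r f * IncidenceAlgebra.bar r g := by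
  refine IncidenceAlgebra.ext fun x y hxy => ?_
  rw [IncidenceAlgebra.bar_apply, IncidenceAlgebra.mul_apply, IncidenceAlgebra.mul_apply]
  rw [reflect_sum']
  refine Finset.sum_congr rfl fun z hz => ?_
  obtain ⟨h1, h2⟩ := Finset.mem_Icc.mp hz
  rw [IncidenceAlgebra.bar_apply, IncidenceAlgebra.bar_apply, ← hr_add x z y h1 h2,
    Polynomial.reflect_mul _ _ (hf x z h1) (hg z y h2)]

lemma mu_natDegree_aux {P : Type*} [PartialOrder P] [LocallyFiniteOrder P] [DecidableEq P] :
    ∀ n : ℕ, ∀ x y : P, (Finset.Icc x y).card ≤ n →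
      (IncidenceAlgebra.mu (Polynomial ℤ) x y).natDegree = 0 := by
  intro n
  induction n with
  | zero =>
    intro x y h
    have hxy : ¬ x ≤ y := by
      intro hle
      have : y ∈ Finset.Icc x y := Finset.mem_Icc.mpr ⟨hle, le_rfl⟩
      have := Finset.card_pos.mpr ⟨y, this⟩
      omega
    rw [IncidenceAlgebra.apply_eq_zero_of_not_le hxy, Polynomial.natDegree_zero]
  | succ n ih =>
    intro x y h
    rw [IncidenceAlgebra.mu_apply]
    split
    · simp
    · rw [natDegree_neg]
      refine Nat.le_antisymm (Polynomial.natDegree_sum_le_of_forall_le _ _ fun z hz => ?_)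
        (Nat.zero_le _)
      obtain ⟨h1, h2⟩ := Finset.mem_Ico.mp hz
      have hsub : Finset.Icc x z ⊂ Finset.Icc x y := by
        refine Finset.ssubset_iff_of_subset (Finset.Icc_subset_Icc_right h2.le) |>.mpr ?_
        exact ⟨y, Finset.mem_Icc.mpr ⟨h1.trans h2.le, le_rfl⟩,
          fun hy => lt_irrefl y (lt_of_le_of_lt (Finset.mem_Icc.mp hy).2 h2)⟩
      have := Finset.card_lt_card hsub
      exact (ih x z (by omega)).le

lemma mu_natDegree {P : Type*} [PartialOrder P] [LocallyFiniteOrder P] [DecidableEq P]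
    (x y : P) : (IncidenceAlgebra.mu (Polynomial ℤ) x y).natDegree = 0 :=
  mu_natDegree_aux _ x y le_rfl

/-- For a locally finite poset `P` with weak rank function `r`, the zeta function `ζ`
(with `ζ x y = 1` for all `x ≤ y`) is a unit of the incidence algebra of `P` over `ℤ[t]`,
and `χ := ζ⁻¹ * ζ̄` is a `P`-kernel: `χ x x = 1` for all `x`, `deg (χ x y) ≤ r x y` for
all `x ≤ y`, and `χ̄ * χ = δ`. -/
theorem zeta_unit_and_characteristic_function_is_kernel {P : Type*} [PartialOrder P]
    [LocallyFiniteOrder P] [DecidableEq P] [DecidableRel (α := P) (· ≤ ·)]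
    (r : P → P → ℕ)
    (hr_pos : ∀ x y : P, x < y → 0 < r x y)
    (hr_add : ∀ x y z : P, x ≤ y → y ≤ z → r x y + r y z = r x z) :
    IsUnit (IncidenceAlgebra.zeta (Polynomial ℤ) (α := P)) ∧
      ∀ χ : IncidenceAlgebra (Polynomial ℤ) P,
        χ = Ring.inverse (IncidenceAlgebra.zeta (Polynomial ℤ)) *
              IncidenceAlgebra.bar r (IncidenceAlgebra.zeta (Polynomial ℤ)) →
          (∀ x : P, χ x x = 1) ∧
          (∀ x y : P, x ≤ y → (χ x y).natDegree ≤ r x y) ∧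
          IncidenceAlgebra.bar r χ * χ = 1 := by
  set ζ : IncidenceAlgebra (Polynomial ℤ) P := IncidenceAlgebra.zeta (Polynomial ℤ) with hζ
  set μ : IncidenceAlgebra (Polynomial ℤ) P := IncidenceAlgebra.mu (Polynomial ℤ) with hμ
  have hμζ : μ * ζ = 1 := IncidenceAlgebra.mu_mul_zeta _ _
  have hζμ : ζ * μ = 1 := IncidenceAlgebra.zeta_mul_mu
  set u : (IncidenceAlgebra (Polynomial ℤ) P)ˣ := ⟨ζ, μ, hζμ, hμζ⟩ with hu
  have hunit : IsUnit ζ := ⟨u, rfl⟩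
  have hinv : Ring.inverse ζ = μ := by
    rw [show ζ = (u : IncidenceAlgebra (Polynomial ℤ) P) from rfl, Ring.inverse_unit]
    rfl
  have hr0 : ∀ x : P, r x x = 0 := fun x => by
    have := hr_add x x x le_rfl le_rfl; omega
  have hζdeg : ∀ x y : P, x ≤ y → (ζ x y).natDegree ≤ r x y := by
    intro x y hxy
    simp [hζ, IncidenceAlgebra.zeta_apply, hxy]
  have hμdeg : ∀ x y : P, x ≤ y → (μ x y).natDegree ≤ r x y := by
    intro x y hxy
    simp [hμ, mu_natDegree]
  have hbζdeg : ∀ x y : P, x ≤ y → ((IncidenceAlgebra.bar r ζ) x y).natDegree ≤ r x y := by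
    intro x y hxy
    simp [hζ, IncidenceAlgebra.zeta_apply, hxy, Polynomial.reflect_one]
  have hbar_one : IncidenceAlgebra.bar r 1 = 1 := by
    refine IncidenceAlgebra.ext fun x y hxy => ?_
    rcases eq_or_ne x y with rfl | hne
    · simp [Polynomial.reflect_one, hr0]
    · simp [hne]
  refine ⟨hunit, fun χ hχ => ?_⟩
  rw [hinv] at hχ
  subst hχ
  refine ⟨?_, ?_, ?_⟩
  · intro x
    simp [IncidenceAlgebra.mul_apply, Finset.Icc_self, hμ, hζ,
      IncidenceAlgebra.zeta_apply, Polynomial.reflect_one, hr0]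
  · intro x y hxy
    rw [IncidenceAlgebra.mul_apply]
    refine Polynomial.natDegree_sum_le_of_forall_le _ _ fun z hz => ?_
    obtain ⟨h1, h2⟩ := Finset.mem_Icc.mp hz
    refine (Polynomial.natDegree_mul_le).trans ?_
    have hb := hbζdeg z y h2
    have hle : r x z + r z y = r x y := hr_add x z y h1 h2
    have hm : (μ x z).natDegree = 0 := mu_natDegree x z
    omega
  · have hbarχ : IncidenceAlgebra.bar r (μ * IncidenceAlgebra.bar r ζ)
        = IncidenceAlgebra.bar r μ * ζ := by
      rw [IncidenceAlgebra.bar_mul r hr_add μ _ hμdeg hbζdeg, IncidenceAlgebra.bar_bar]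
    rw [hbarχ, mul_assoc, ← mul_assoc ζ μ, hζμ, one_mul,
      ← IncidenceAlgebra.bar_mul r hr_add μ ζ hμdeg hζdeg, hμζ, hbar_one]
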